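/- Let Ω ⊂ ℝ^N be a bounded open set, ξ₀ ∈ Ω and r > 0. There exists C > 0 such that for all μ, ν ∈ (0,1] and all ξ, η ∈ ℝ^N with |ξ - ξ₀| ≤ r/2 and |η - ξ₀| ≤ r/2, one has ∫_{Ω ∖ B(ξ₀,r)} U_{ν,η}(x)^{p+1} dx ≤ C ν^N and ∫_{Ω ∖ B(ξ₀,r)} U_{μ,ξ}(x)^p U_{ν,η}(x) dx ≤ C μ^{(N+4)/2} ν^{(N-4)/2}. -/

import Mathlib

open MeasureTheory Metric

/-- `α_N = (N(N-4)(N-2)(N+2))^((N-4)/8)`. -/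
noncomputable def alphaN (N : ℕ) : ℝ :=
  ((N : ℝ) * ((N : ℝ) - 4) * ((N : ℝ) - 2) * ((N : ℝ) + 2)) ^ (((N : ℝ) - 4) / 8)

/-- The critical exponent `p = (N+4)/(N-4)`. -/
noncomputable def pexp (N : ℕ) : ℝ := ((N : ℝ) + 4) / ((N : ℝ) - 4)

/-- The standard bubble `U_{μ,ξ}(x) = α_N (μ/(μ² + |x-ξ|²))^((N-4)/2)`. -/
noncomputable def bubble (N : ℕ) (μ : ℝ) (ξ : EuclideanSpace ℝ (Fin N))
    (x : EuclideanSpace ℝ (Fin N)) : ℝ :=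
  alphaN N * (μ / (μ ^ 2 + ‖x - ξ‖ ^ 2)) ^ (((N : ℝ) - 4) / 2)

lemma alphaN_nonneg (N : ℕ) (hN : 5 ≤ N) : 0 ≤ alphaN N := by
  apply Real.rpow_nonneg
  have hNr : (5 : ℝ) ≤ (N : ℝ) := by exact_mod_cast hN
  have h1 : (0 : ℝ) ≤ (N : ℝ) * ((N : ℝ) - 4) := by nlinarith
  exact mul_nonneg (mul_nonneg h1 (by linarith)) (by linarith)

lemma bubble_nonneg (N : ℕ) (hN : 5 ≤ N) (μ : ℝ) (hμ : 0 ≤ μ) (ξ x : EuclideanSpace ℝ (Fin N)) :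
    0 ≤ bubble N μ ξ x :=
  mul_nonneg (alphaN_nonneg N hN)
    (Real.rpow_nonneg (div_nonneg hμ (by positivity)) _)

/-- Pointwise bound away from the concentration point. -/
lemma bubble_le (N : ℕ) (μ r : ℝ) (hμ : 0 ≤ μ) (hr : 0 < r)
    (ξ x : EuclideanSpace ℝ (Fin N)) (hd : r / 2 ≤ ‖x - ξ‖) (hN : 5 ≤ N) :
    bubble N μ ξ x ≤
      alphaN N * ((2 / r) ^ 2) ^ (((N : ℝ) - 4) / 2) * μ ^ (((N : ℝ) - 4) / 2) := by
  have hNr : (5 : ℝ) ≤ (N : ℝ) := by exact_mod_cast hN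
  have he : (0 : ℝ) ≤ ((N : ℝ) - 4) / 2 := by linarith
  have hbase : μ / (μ ^ 2 + ‖x - ξ‖ ^ 2) ≤ μ * (2 / r) ^ 2 := by
    have hden : (r / 2) ^ 2 ≤ μ ^ 2 + ‖x - ξ‖ ^ 2 := by
      nlinarith [sq_nonneg μ, sq_nonneg (‖x - ξ‖ - r / 2)]
    have hpos : (0 : ℝ) < (r / 2) ^ 2 := by positivity
    have h1 : μ / (μ ^ 2 + ‖x - ξ‖ ^ 2) ≤ μ / (r / 2) ^ 2 :=
      div_le_div_of_nonneg_left hμ hpos hden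
    calc μ / (μ ^ 2 + ‖x - ξ‖ ^ 2) ≤ μ / (r / 2) ^ 2 := h1
      _ = μ * (2 / r) ^ 2 := by field_simp
  have h2 : (μ / (μ ^ 2 + ‖x - ξ‖ ^ 2)) ^ (((N : ℝ) - 4) / 2)
      ≤ (μ * (2 / r) ^ 2) ^ (((N : ℝ) - 4) / 2) :=
    Real.rpow_le_rpow (div_nonneg hμ (by positivity)) hbase he
  have h3 : (μ * (2 / r) ^ 2) ^ (((N : ℝ) - 4) / 2)
      = μ ^ (((N : ℝ) - 4) / 2) * ((2 / r) ^ 2) ^ (((N : ℝ) - 4) / 2) :=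
    Real.mul_rpow hμ (by positivity)
  have := mul_le_mul_of_nonneg_left h2 (alphaN_nonneg N hN)
  calc bubble N μ ξ x ≤ alphaN N * (μ * (2 / r) ^ 2) ^ (((N : ℝ) - 4) / 2) := this
    _ = alphaN N * ((2 / r) ^ 2) ^ (((N : ℝ) - 4) / 2) * μ ^ (((N : ℝ) - 4) / 2) := by
        rw [h3]; ring

/-- Exterior estimates: away from the concentration region,
`∫_{Ω∖B(ξ₀,r)} U_{ν,η}^{p+1} ≤ C ν^N` and
`∫_{Ω∖B(ξ₀,r)} U_{μ,ξ}^p U_{ν,η} ≤ C μ^{(N+4)/2} ν^{(N-4)/2}`. -/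
theorem statement7 (N : ℕ) (hN : 5 ≤ N) (Ω : Set (EuclideanSpace ℝ (Fin N)))
    (hΩo : IsOpen Ω) (hΩb : Bornology.IsBounded Ω)
    (ξ₀ : EuclideanSpace ℝ (Fin N)) (hξ₀ : ξ₀ ∈ Ω) (r : ℝ) (hr : 0 < r) :
    ∃ C > (0 : ℝ), ∀ μ ν : ℝ, 0 < μ → μ ≤ 1 → 0 < ν → ν ≤ 1 →
      ∀ ξ η : EuclideanSpace ℝ (Fin N), ‖ξ - ξ₀‖ ≤ r / 2 → ‖η - ξ₀‖ ≤ r / 2 →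
      (∫ x in Ω \ ball ξ₀ r, bubble N ν η x ^ (pexp N + 1) ≤ C * ν ^ (N : ℝ)) ∧
      (∫ x in Ω \ ball ξ₀ r, bubble N μ ξ x ^ pexp N * bubble N ν η x
        ≤ C * μ ^ (((N : ℝ) + 4) / 2) * ν ^ (((N : ℝ) - 4) / 2)) := by
  have hNr : (5 : ℝ) ≤ (N : ℝ) := by exact_mod_cast hN
  have hne : (N : ℝ) - 4 ≠ 0 := by linarith
  set e : ℝ := ((N : ℝ) - 4) / 2 with he_def
  have he : (0 : ℝ) ≤ e := by rw [he_def]; linarith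
  have hp : (0 : ℝ) ≤ pexp N := div_nonneg (by linarith) (by linarith)
  set A : ℝ := alphaN N * ((2 / r) ^ 2) ^ e with hA_def
  have hA : 0 ≤ A := mul_nonneg (alphaN_nonneg N hN) (Real.rpow_nonneg (by positivity) _)
  set s : Set (EuclideanSpace ℝ (Fin N)) := Ω \ ball ξ₀ r with hs_def
  have hsm : MeasurableSet s := hΩo.measurableSet.diff measurableSet_ball
  have hsfin : volume s < ⊤ :=
    lt_of_le_of_lt (measure_mono Set.diff_subset) hΩb.measure_lt_top
  set V : ℝ := (volume s).toReal with hV_def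
  have hV : 0 ≤ V := ENNReal.toReal_nonneg
  -- key exponent identities
  have hexp1 : e * (pexp N + 1) = (N : ℝ) := by
    rw [he_def, pexp]; field_simp; ring
  have hexp2 : e * pexp N = ((N : ℝ) + 4) / 2 := by
    rw [he_def, pexp]; field_simp
  refine ⟨(A ^ (pexp N + 1) + A ^ pexp N * A) * V + 1, by positivity, ?_⟩
  intro μ ν hμ hμ1 hν hν1 ξ η hξ hη
  -- distances from points of s
  have hdist : ∀ ζ : EuclideanSpace ℝ (Fin N), ‖ζ - ξ₀‖ ≤ r / 2 →
      ∀ x ∈ s, r / 2 ≤ ‖x - ζ‖ := by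
    intro ζ hζ x hx
    have hx2 : r ≤ ‖x - ξ₀‖ := by
      have := hx.2
      simp only [mem_ball, dist_eq_norm] at this
      linarith [not_lt.mp this]
    have := norm_sub_norm_le (x - ξ₀) (ζ - ξ₀)
    have h3 : x - ξ₀ - (ζ - ξ₀) = x - ζ := by abel
    rw [h3] at this
    linarith
  constructor
  · -- first integral
    have hbound : ∀ x ∈ s, ‖bubble N ν η x ^ (pexp N + 1)‖ ≤ A ^ (pexp N + 1) * ν ^ (N : ℝ) := by
      intro x hx
      have hb := bubble_le N ν r hν.le hr η x (hdist η hη x hx) hN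
      have hb0 := bubble_nonneg N hN ν hν.le η x
      rw [Real.norm_of_nonneg (Real.rpow_nonneg hb0 _)]
      calc bubble N ν η x ^ (pexp N + 1) ≤ (A * ν ^ e) ^ (pexp N + 1) :=
            Real.rpow_le_rpow hb0 hb (by linarith)
        _ = A ^ (pexp N + 1) * (ν ^ e) ^ (pexp N + 1) :=
            Real.mul_rpow hA (Real.rpow_nonneg hν.le _)
        _ = A ^ (pexp N + 1) * ν ^ (N : ℝ) := by
            rw [← Real.rpow_mul hν.le, hexp1]
    calc ∫ x in s, bubble N ν η x ^ (pexp N + 1)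
        ≤ ‖∫ x in s, bubble N ν η x ^ (pexp N + 1)‖ := le_abs_self _
      _ ≤ A ^ (pexp N + 1) * ν ^ (N : ℝ) * V :=
          norm_setIntegral_le_of_norm_le_const hsfin hbound
      _ ≤ ((A ^ (pexp N + 1) + A ^ pexp N * A) * V + 1) * ν ^ (N : ℝ) := by
          have h1 : A ^ (pexp N + 1) * V ≤ (A ^ (pexp N + 1) + A ^ pexp N * A) * V + 1 := by
            nlinarith [Real.rpow_nonneg hA (pexp N + 1), Real.rpow_nonneg hA (pexp N),
              mul_nonneg (Real.rpow_nonneg hA (pexp N)) hA]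
          have hν' : 0 ≤ ν ^ (N : ℝ) := Real.rpow_nonneg hν.le _
          nlinarith
  · -- second integral
    have hbound : ∀ x ∈ s, ‖bubble N μ ξ x ^ pexp N * bubble N ν η x‖ ≤
        A ^ pexp N * A * (μ ^ (((N : ℝ) + 4) / 2) * ν ^ e) := by
      intro x hx
      have hbμ := bubble_le N μ r hμ.le hr ξ x (hdist ξ hξ x hx) hN
      have hbν := bubble_le N ν r hν.le hr η x (hdist η hη x hx) hN
      have hb0μ := bubble_nonneg N hN μ hμ.le ξ x
      have hb0ν := bubble_nonneg N hN ν hν.le η x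
      rw [Real.norm_of_nonneg (mul_nonneg (Real.rpow_nonneg hb0μ _) hb0ν)]
      have h1 : bubble N μ ξ x ^ pexp N ≤ A ^ pexp N * μ ^ (((N : ℝ) + 4) / 2) := by
        calc bubble N μ ξ x ^ pexp N ≤ (A * μ ^ e) ^ pexp N :=
              Real.rpow_le_rpow hb0μ hbμ hp
          _ = A ^ pexp N * (μ ^ e) ^ pexp N :=
              Real.mul_rpow hA (Real.rpow_nonneg hμ.le _)
          _ = A ^ pexp N * μ ^ (((N : ℝ) + 4) / 2) := by
              rw [← Real.rpow_mul hμ.le, hexp2]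
      calc bubble N μ ξ x ^ pexp N * bubble N ν η x
          ≤ (A ^ pexp N * μ ^ (((N : ℝ) + 4) / 2)) * (A * ν ^ e) := by
            apply mul_le_mul h1 hbν hb0ν
            positivity
        _ = A ^ pexp N * A * (μ ^ (((N : ℝ) + 4) / 2) * ν ^ e) := by ring
    calc ∫ x in s, bubble N μ ξ x ^ pexp N * bubble N ν η x
        ≤ ‖∫ x in s, bubble N μ ξ x ^ pexp N * bubble N ν η x‖ := le_abs_self _
      _ ≤ A ^ pexp N * A * (μ ^ (((N : ℝ) + 4) / 2) * ν ^ e) * V :=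
          norm_setIntegral_le_of_norm_le_const hsfin hbound
      _ ≤ ((A ^ (pexp N + 1) + A ^ pexp N * A) * V + 1) * μ ^ (((N : ℝ) + 4) / 2)
            * ν ^ (((N : ℝ) - 4) / 2) := by
          have hμ' : 0 ≤ μ ^ (((N : ℝ) + 4) / 2) := Real.rpow_nonneg hμ.le _
          have hν' : 0 ≤ ν ^ e := Real.rpow_nonneg hν.le _
          have hK : A ^ pexp N * A * V ≤ (A ^ (pexp N + 1) + A ^ pexp N * A) * V + 1 := by
            nlinarith [Real.rpow_nonneg hA (pexp N + 1),
              mul_nonneg (Real.rpow_nonneg hA (pexp N)) hA]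
          have : A ^ pexp N * A * (μ ^ (((N : ℝ) + 4) / 2) * ν ^ e) * V
              = (A ^ pexp N * A * V) * (μ ^ (((N : ℝ) + 4) / 2) * ν ^ e) := by ring
          rw [this, he_def]
          nlinarith [mul_nonneg hμ' hν', mul_nonneg (mul_nonneg (Real.rpow_nonneg hA (pexp N)) hA) hV]
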